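/- arXiv:2011.06539 — 2 statements merged into one kernel-verified Lean document; each statement's English description precedes it below -/
import Mathlib

section
/- Existence of minimizers for the discretized shared prior learning problem with the explicit Euler scheme: Fix α ∈ [0,1], p ∈ [1,∞), S ∈ ℕ, T_max > 0, compact sets Ξ ⊂ ℝ^{n_Ξ}, Θ ⊂ ℝ^{n_Θ}, linear maps A : ℝ^{n_y} → ℝ^{n_z}, A_init : ℝ^{n_z} → ℝ^{n_y}, a patch extraction operator P : ℝ^{n_y} → ℝ^{N × n_p²}, and a feature extraction operator F : ℝ^{N × n_p²} → ℝ^{N × n_F}. Let D : ℝ^{n_z} × ℝ^{n_z} × Ξ → [0,∞) and R : ℝ^{n_y} × Θ → ℝ be continuously differentiable with compact support. For (z,T,ξ,θ) define the explicit Euler iterates x₀(z) = A_init z and x_{s+1} = x_s − (T/S)(Aᵀ ∇₁D(A x_s, z, ξ) + ∇₁R(x_s, θ)) for s = 0,…,S−1, and write x_S(z,T,ξ,θ) for the terminal iterate. Let μ_Su be a probability measure on ℝ^{n_y} × ℝ^{n_z} and μ_Un a probability measure on ℝ^{n_z} × ℝ^{N × n_p²}, both with finite second moments. Then the infimum over Γ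 = [0,T_max]² × Ξ² × Θ of J(T_Su, T_Un, ξ_Su, ξ_Un, θ) := α ∫ ‖x_S(z̄,T_Su,ξ_Su,θ) − ȳ‖₂ dμ_Su(ȳ,z̄) + (1−α) ∫ W_p(rows of F(P x_S(ẑ,T_Un,ξ_Un,θ)), rows of F(p̂)) dμ_Un(ẑ,p̂) is attained. -/
set_option linter.unusedSectionVars false
set_option linter.unusedVariables false
set_option maxHeartbeats 4000000

open Finset Set MeasureTheory

/-- The `ℓᵖ`-norm of a vector in `ℝᵏ`. -/
noncomputable def lpNormVec (p : ℝ) {k : ℕ} (x : EuclideanSpace ℝ (Fin k)) : ℝ :=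
  (∑ i, |x i| ^ p) ^ (1 / p)

/-- Discrete Wasserstein distance between the empirical measures of two
collections of `N` points in `ℝᵏ`, with `ℓᵖ`-norm cost. -/
noncomputable def discreteWasserstein (p : ℝ) {k N : ℕ}
    (v w : Fin N → EuclideanSpace ℝ (Fin k)) : ℝ :=
  sInf {c : ℝ | ∃ P : Fin N → Fin N → ℝ,
    (∀ i j, 0 ≤ P i j) ∧ (∀ i, ∑ j, P i j = 1 / N) ∧ (∀ j, ∑ i, P i j = 1 / N) ∧
    c = ∑ i, ∑ j, lpNormVec p (v i - w j) * P i j}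

section Helpers

variable {E F' : Type*} [NormedAddCommGroup E] [InnerProductSpace ℝ E] [CompleteSpace E]
  [NormedAddCommGroup F'] [NormedSpace ℝ F']

lemma fderivPartialEq (f : E × F' → ℝ) (hf : ContDiff ℝ 1 f) (x : E) (y : F') :
    fderiv ℝ (fun u => f (u, y)) x = (fderiv ℝ f (x, y)).comp (ContinuousLinearMap.inl ℝ E F') :=
  ((((hf.differentiable one_ne_zero) (x, y)).hasFDerivAt).comp x (hasFDerivAt_prodMk_left x y)).fderiv

lemma gradPartialCont (f : E × F' → ℝ) (hf : ContDiff ℝ 1 f) :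
    Continuous (fun q : E × F' => gradient (fun u => f (u, q.2)) q.1) := by
  have h : (fun q : E × F' => gradient (fun u => f (u, q.2)) q.1)
      = fun q => (InnerProductSpace.toDual ℝ E).symm
          ((fderiv ℝ f q).comp (ContinuousLinearMap.inl ℝ E F')) := by
    funext q
    show (InnerProductSpace.toDual ℝ E).symm (fderiv ℝ (fun u => f (u, q.2)) q.1) = _
    rw [fderivPartialEq f hf q.1 q.2]
  rw [h]
  exact (InnerProductSpace.toDual ℝ E).symm.continuous.comp
    ((hf.continuous_fderiv one_ne_zero).clm_comp continuous_const)

lemma gradPartialBound (f : E × F' → ℝ) (hf : ContDiff ℝ 1 f) (hsupp : HasCompactSupport f) :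
    ∃ C : ℝ, 0 ≤ C ∧ ∀ (x : E) (y : F'), ‖gradient (fun u => f (u, y)) x‖ ≤ C := by
  obtain ⟨C, hC⟩ := ((hf.continuous_fderiv one_ne_zero).bounded_above_of_compact_support (hsupp.fderiv (𝕜 := ℝ)))
  refine ⟨max C 0, le_max_right _ _, fun x y => ?_⟩
  have h1 : gradient (fun u => f (u, y)) x
      = (InnerProductSpace.toDual ℝ E).symm (fderiv ℝ (fun u => f (u, y)) x) := rfl
  rw [h1, LinearIsometryEquiv.norm_map, fderivPartialEq f hf x y]
  have h2 : ‖(fderiv ℝ f (x, y)).comp (ContinuousLinearMap.inl ℝ E F')‖ ≤ ‖fderiv ℝ f (x, y)‖ := by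
    refine ContinuousLinearMap.opNorm_le_bound _ (norm_nonneg (fderiv ℝ f (x, y))) fun u => ?_
    have : ‖(ContinuousLinearMap.inl ℝ E F') u‖ = ‖u‖ := by
      simp [Prod.norm_def]
    calc ‖(fderiv ℝ f (x, y)) ((ContinuousLinearMap.inl ℝ E F') u)‖
        ≤ ‖fderiv ℝ f (x, y)‖ * ‖(ContinuousLinearMap.inl ℝ E F') u‖ :=
          ContinuousLinearMap.le_opNorm _ _
      _ = ‖fderiv ℝ f (x, y)‖ * ‖u‖ := by rw [this]
  exact h2.trans ((hC (x, y)).trans (le_max_left _ _))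

end Helpers

section Euler

variable {ny nz nΞ nΘ : ℕ}

lemma eulerIterCont (S n : ℕ)
    (A : EuclideanSpace ℝ (Fin ny) →L[ℝ] EuclideanSpace ℝ (Fin nz))
    (D : EuclideanSpace ℝ (Fin nz) × EuclideanSpace ℝ (Fin nz) ×
        EuclideanSpace ℝ (Fin nΞ) → ℝ) (hD : ContDiff ℝ 1 D)
    (R : EuclideanSpace ℝ (Fin ny) × EuclideanSpace ℝ (Fin nΘ) → ℝ) (hR : ContDiff ℝ 1 R)
    (x0 : EuclideanSpace ℝ (Fin nz) → EuclideanSpace ℝ (Fin ny)) (hx0 : Continuous x0) :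
    Continuous (fun w : EuclideanSpace ℝ (Fin nz) × ℝ × EuclideanSpace ℝ (Fin nΞ) ×
        EuclideanSpace ℝ (Fin nΘ) =>
      (fun x : EuclideanSpace ℝ (Fin ny) => x - (w.2.1 / (S : ℝ)) •
          ((ContinuousLinearMap.adjoint A) (gradient (fun u => D (u, w.1, w.2.2.1)) (A x)) +
            gradient (fun u => R (u, w.2.2.2)) x))^[n] (x0 w.1)) := by
  have hgD := gradPartialCont D hD
  have hgR := gradPartialCont R hR
  induction n with
  | zero => exact hx0.comp continuous_fst
  | succ n ih =>
      simp only [Function.iterate_succ_apply']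
      have hg : Continuous (fun r : (EuclideanSpace ℝ (Fin nz) × ℝ × EuclideanSpace ℝ (Fin nΞ) ×
            EuclideanSpace ℝ (Fin nΘ)) × EuclideanSpace ℝ (Fin ny) =>
          r.2 - (r.1.2.1 / (S : ℝ)) • ((ContinuousLinearMap.adjoint A)
              (gradient (fun u => D (u, r.1.1, r.1.2.2.1)) (A r.2)) +
            gradient (fun u => R (u, r.1.2.2.2)) r.2)) := by
        refine continuous_snd.sub (Continuous.smul ((continuous_fst.snd.fst).div_const _) ?_)
        refine Continuous.add ?_ ?_
        · exact (ContinuousLinearMap.adjoint A).continuous.comp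
            (hgD.comp ((A.continuous.comp continuous_snd).prodMk
              (continuous_fst.fst.prodMk continuous_fst.snd.snd.fst)))
        · exact hgR.comp (continuous_snd.prodMk continuous_fst.snd.snd.snd)
      exact hg.comp (continuous_id.prodMk ih)

lemma eulerIterBound (S : ℕ) (hS : 0 < S)
    (A : EuclideanSpace ℝ (Fin ny) →L[ℝ] EuclideanSpace ℝ (Fin nz))
    (D : EuclideanSpace ℝ (Fin nz) × EuclideanSpace ℝ (Fin nz) ×
        EuclideanSpace ℝ (Fin nΞ) → ℝ)
    (R : EuclideanSpace ℝ (Fin ny) × EuclideanSpace ℝ (Fin nΘ) → ℝ)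
    (CD CR : ℝ)
    (hCD : ∀ (x : EuclideanSpace ℝ (Fin nz)) (y : EuclideanSpace ℝ (Fin nz) ×
        EuclideanSpace ℝ (Fin nΞ)), ‖gradient (fun u => D (u, y)) x‖ ≤ CD)
    (hCR : ∀ (x : EuclideanSpace ℝ (Fin ny)) (y : EuclideanSpace ℝ (Fin nΘ)),
        ‖gradient (fun u => R (u, y)) x‖ ≤ CR)
    (z : EuclideanSpace ℝ (Fin nz)) (T : ℝ) (ξ : EuclideanSpace ℝ (Fin nΞ))
    (θ : EuclideanSpace ℝ (Fin nΘ)) (x0 : EuclideanSpace ℝ (Fin ny)) (n : ℕ) :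
    ‖(fun x : EuclideanSpace ℝ (Fin ny) => x - (T / (S : ℝ)) •
          ((ContinuousLinearMap.adjoint A) (gradient (fun u => D (u, z, ξ)) (A x)) +
            gradient (fun u => R (u, θ)) x))^[n] x0 - x0‖
      ≤ n * ((|T| / (S : ℝ)) * (‖ContinuousLinearMap.adjoint A‖ * CD + CR)) := by
  set K := ‖ContinuousLinearMap.adjoint A‖ * CD + CR with hK
  have hCD0 : 0 ≤ CD := le_trans (norm_nonneg _) (hCD 0 (0, 0))
  have hCR0 : 0 ≤ CR := le_trans (norm_nonneg _) (hCR 0 0)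
  have hK0 : 0 ≤ K := by positivity
  have hstep : ∀ x : EuclideanSpace ℝ (Fin ny),
      ‖(x - (T / (S : ℝ)) • ((ContinuousLinearMap.adjoint A)
          (gradient (fun u => D (u, z, ξ)) (A x)) + gradient (fun u => R (u, θ)) x)) - x‖
        ≤ (|T| / (S : ℝ)) * K := by
    intro x
    rw [sub_sub_cancel_left, norm_neg, norm_smul]
    have h1 : ‖(ContinuousLinearMap.adjoint A) (gradient (fun u => D (u, z, ξ)) (A x)) +
        gradient (fun u => R (u, θ)) x‖ ≤ K := by
      refine (norm_add_le _ _).trans (add_le_add ?_ (hCR x θ))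
      calc ‖(ContinuousLinearMap.adjoint A) (gradient (fun u => D (u, z, ξ)) (A x))‖
          ≤ ‖ContinuousLinearMap.adjoint A‖ * ‖gradient (fun u => D (u, z, ξ)) (A x)‖ :=
            ContinuousLinearMap.le_opNorm _ _
        _ ≤ ‖ContinuousLinearMap.adjoint A‖ * CD :=
            mul_le_mul_of_nonneg_left (hCD (A x) (z, ξ)) (norm_nonneg _)
    have h2 : ‖T / (S : ℝ)‖ = |T| / (S : ℝ) := by
      rw [Real.norm_eq_abs, abs_div, Nat.abs_cast]
    rw [h2]
    exact mul_le_mul_of_nonneg_left h1 (by positivity)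
  induction n with
  | zero => simp
  | succ n ih =>
      rw [Function.iterate_succ_apply']
      set f := fun x : EuclideanSpace ℝ (Fin ny) => x - (T / (S : ℝ)) •
          ((ContinuousLinearMap.adjoint A) (gradient (fun u => D (u, z, ξ)) (A x)) +
            gradient (fun u => R (u, θ)) x) with hf
      have h3 : ‖f (f^[n] x0) - x0‖ ≤ ‖f (f^[n] x0) - f^[n] x0‖ + ‖f^[n] x0 - x0‖ := by
        have : f (f^[n] x0) - x0 = (f (f^[n] x0) - f^[n] x0) + (f^[n] x0 - x0) := by abel
        rw [this]; exact norm_add_le _ _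
      have h4 := hstep (f^[n] x0)
      push_cast
      calc ‖f (f^[n] x0) - x0‖ ≤ (|T| / (S : ℝ)) * K + n * ((|T| / (S : ℝ)) * K) := by
            refine h3.trans (add_le_add ?_ ih)
            exact h4
        _ = ((n : ℝ) + 1) * ((|T| / (S : ℝ)) * K) := by ring

end Euler

section LpW

variable {p : ℝ} {k N : ℕ}

lemma lpNormVec_nonneg (p : ℝ) (x : EuclideanSpace ℝ (Fin k)) : 0 ≤ lpNormVec p x :=
  Real.rpow_nonneg (Finset.sum_nonneg fun i _ => Real.rpow_nonneg (abs_nonneg _) _) _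

lemma lpNormVec_triangle (hp : 1 ≤ p) (x y : EuclideanSpace ℝ (Fin k)) :
    lpNormVec p (x + y) ≤ lpNormVec p x + lpNormVec p y := by
  have h := Real.Lp_add_le (Finset.univ : Finset (Fin k)) (fun i => x i) (fun i => y i) hp
  unfold lpNormVec
  simpa using h

lemma lpNormVec_zero (hp : 1 ≤ p) : lpNormVec p (0 : EuclideanSpace ℝ (Fin k)) = 0 := by
  have hp0 : p ≠ 0 := by positivity
  unfold lpNormVec
  simp [Real.zero_rpow hp0, Real.zero_rpow (inv_ne_zero hp0)]

lemma lpNormVec_cont (hp : 1 ≤ p) :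
    Continuous fun x : EuclideanSpace ℝ (Fin k) => lpNormVec p x := by
  have hp0 : (0:ℝ) ≤ p := by positivity
  refine Continuous.rpow_const ?_ (fun x => Or.inr (by positivity))
  refine continuous_finset_sum _ fun i _ => ?_
  exact ((PiLp.continuous_apply 2 _ i).abs).rpow_const (fun x => Or.inr hp0)

lemma lpNormVec_le (hp : 1 ≤ p) (x : EuclideanSpace ℝ (Fin k)) :
    lpNormVec p x ≤ (k : ℝ) * ‖x‖ := by
  have hp0 : p ≠ 0 := by positivity
  have hp0' : (0:ℝ) < p := by positivity
  rcases Nat.eq_zero_or_pos k with hk | hk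
  · subst hk
    rw [lpNormVec]
    simp [Real.zero_rpow (inv_ne_zero hp0)]
  · have hxi : ∀ i, |x i| ≤ ‖x‖ := by
      intro i
      have := EuclideanSpace.norm_eq x
      rw [this]
      have h1 : |x i| = Real.sqrt (|x i| ^ 2) := by
        rw [Real.sqrt_sq_eq_abs, abs_abs]
      rw [h1]
      apply Real.sqrt_le_sqrt
      exact Finset.single_le_sum (f := fun j => ‖x j‖ ^ 2)
        (fun j _ => sq_nonneg _) (Finset.mem_univ i) |>.trans_eq' (by simp [Real.norm_eq_abs])
    have h2 : lpNormVec p x ≤ ((k : ℝ) * ‖x‖ ^ p) ^ (1 / p) := by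
      unfold lpNormVec
      refine Real.rpow_le_rpow (Finset.sum_nonneg fun i _ => Real.rpow_nonneg (abs_nonneg _) _)
        ?_ (by positivity)
      calc ∑ i, |x i| ^ p ≤ ∑ _i : Fin k, ‖x‖ ^ p :=
            Finset.sum_le_sum fun i _ => Real.rpow_le_rpow (abs_nonneg _) (hxi i) hp0'.le
        _ = (k : ℝ) * ‖x‖ ^ p := by simp [mul_comm]
    refine h2.trans ?_
    rw [Real.mul_rpow (by positivity) (by positivity)]
    have e1 : (‖x‖ ^ p) ^ (1 / p) = ‖x‖ := by
      rw [← Real.rpow_mul (norm_nonneg x), mul_one_div_cancel hp0, Real.rpow_one]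
    have e2 : (k : ℝ) ^ (1 / p) ≤ (k : ℝ) := by
      calc (k : ℝ) ^ (1 / p) ≤ (k : ℝ) ^ (1 : ℝ) :=
            Real.rpow_le_rpow_of_exponent_le (by exact_mod_cast hk) (by
              rw [div_le_one hp0']; exact hp)
        _ = (k : ℝ) := Real.rpow_one _
    rw [e1]
    exact mul_le_mul_of_nonneg_right e2 (norm_nonneg x)

lemma dW_mem_nonempty (p : ℝ) (v w : Fin N → EuclideanSpace ℝ (Fin k)) :
    (∑ i, lpNormVec p (v i - w i) * (1 / (N : ℝ))) ∈
      {c : ℝ | ∃ P : Fin N → Fin N → ℝ,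
        (∀ i j, 0 ≤ P i j) ∧ (∀ i, ∑ j, P i j = 1 / N) ∧ (∀ j, ∑ i, P i j = 1 / N) ∧
        c = ∑ i, ∑ j, lpNormVec p (v i - w j) * P i j} := by
  refine ⟨fun i j => if i = j then (1 / (N : ℝ)) else 0, fun i j => by positivity, ?_, ?_, ?_⟩
  · intro i; simp
  · intro j; simp
  · refine Finset.sum_congr rfl fun i _ => ?_
    rw [Finset.sum_eq_single i]
    · simp
    · intro j _ hj; simp [Ne.symm hj]
    · simp

lemma dW_setNonneg (p : ℝ) (v w : Fin N → EuclideanSpace ℝ (Fin k)) :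
    ∀ c ∈ {c : ℝ | ∃ P : Fin N → Fin N → ℝ,
        (∀ i j, 0 ≤ P i j) ∧ (∀ i, ∑ j, P i j = 1 / N) ∧ (∀ j, ∑ i, P i j = 1 / N) ∧
        c = ∑ i, ∑ j, lpNormVec p (v i - w j) * P i j}, 0 ≤ c := by
  rintro c ⟨P, hP, -, -, rfl⟩
  exact Finset.sum_nonneg fun i _ => Finset.sum_nonneg fun j _ =>
    mul_nonneg (lpNormVec_nonneg _ _) (hP i j)

lemma dW_nonneg (p : ℝ) (v w : Fin N → EuclideanSpace ℝ (Fin k)) :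
    0 ≤ discreteWasserstein p v w :=
  Real.sInf_nonneg (dW_setNonneg p v w)

lemma dW_le_diag (hp : 1 ≤ p) (v w : Fin N → EuclideanSpace ℝ (Fin k)) :
    discreteWasserstein p v w ≤ ∑ i, lpNormVec p (v i - w i) * (1 / (N : ℝ)) :=
  csInf_le ⟨0, fun c hc => dW_setNonneg p v w c hc⟩ (dW_mem_nonempty p v w)

lemma dW_shift (hp : 1 ≤ p) (v v' w w' : Fin N → EuclideanSpace ℝ (Fin k)) :
    discreteWasserstein p v w ≤ discreteWasserstein p v' w'
      + (∑ i, lpNormVec p (v i - v' i)) * (1 / (N : ℝ))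
      + (∑ j, lpNormVec p (w' j - w j)) * (1 / (N : ℝ)) := by
  set δ := (∑ i, lpNormVec p (v i - v' i)) * (1 / (N : ℝ))
      + (∑ j, lpNormVec p (w' j - w j)) * (1 / (N : ℝ)) with hδ
  rw [add_assoc, ← hδ]
  have key : ∀ c' ∈ {c : ℝ | ∃ P : Fin N → Fin N → ℝ,
      (∀ i j, 0 ≤ P i j) ∧ (∀ i, ∑ j, P i j = 1 / N) ∧ (∀ j, ∑ i, P i j = 1 / N) ∧
      c = ∑ i, ∑ j, lpNormVec p (v' i - w' j) * P i j},
      discreteWasserstein p v w ≤ c' + δ := by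
    rintro c' ⟨P, hP, hrow, hcol, rfl⟩
    have hmem : (∑ i, ∑ j, lpNormVec p (v i - w j) * P i j) ∈ {c : ℝ | ∃ P : Fin N → Fin N → ℝ,
        (∀ i j, 0 ≤ P i j) ∧ (∀ i, ∑ j, P i j = 1 / N) ∧ (∀ j, ∑ i, P i j = 1 / N) ∧
        c = ∑ i, ∑ j, lpNormVec p (v i - w j) * P i j} := ⟨P, hP, hrow, hcol, rfl⟩
    have h1 : discreteWasserstein p v w ≤ ∑ i, ∑ j, lpNormVec p (v i - w j) * P i j :=
      csInf_le ⟨0, fun c hc => dW_setNonneg p v w c hc⟩ hmem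
    refine h1.trans ?_
    have h2 : ∀ i j, lpNormVec p (v i - w j)
        ≤ lpNormVec p (v' i - w' j) + lpNormVec p (v i - v' i) + lpNormVec p (w' j - w j) := by
      intro i j
      have heq : v i - w j = ((v' i - w' j) + (v i - v' i)) + (w' j - w j) := by abel
      rw [heq]
      exact (lpNormVec_triangle hp _ _).trans
        (add_le_add_left (lpNormVec_triangle hp _ _) _)
    have h3 : ∑ i, ∑ j, lpNormVec p (v i - w j) * P i j
        ≤ ∑ i, ∑ j, (lpNormVec p (v' i - w' j) + lpNormVec p (v i - v' i)
            + lpNormVec p (w' j - w j)) * P i j :=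
      Finset.sum_le_sum fun i _ => Finset.sum_le_sum fun j _ =>
        mul_le_mul_of_nonneg_right (h2 i j) (hP i j)
    refine h3.trans ?_
    have h4 : ∑ i, ∑ j, (lpNormVec p (v' i - w' j) + lpNormVec p (v i - v' i)
          + lpNormVec p (w' j - w j)) * P i j
        = (∑ i, ∑ j, lpNormVec p (v' i - w' j) * P i j)
          + (∑ i, ∑ j, lpNormVec p (v i - v' i) * P i j)
          + (∑ i, ∑ j, lpNormVec p (w' j - w j) * P i j) := by
      simp only [add_mul, Finset.sum_add_distrib]
    rw [h4, hδ]
    have h5 : ∑ i, ∑ j, lpNormVec p (v i - v' i) * P i j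
        = ∑ i, lpNormVec p (v i - v' i) * (1 / (N : ℝ)) := by
      refine Finset.sum_congr rfl fun i _ => ?_
      rw [← Finset.mul_sum, hrow i]
    have h6 : ∑ i, ∑ j, lpNormVec p (w' j - w j) * P i j
        = ∑ j, lpNormVec p (w' j - w j) * (1 / (N : ℝ)) := by
      rw [Finset.sum_comm]
      refine Finset.sum_congr rfl fun j _ => ?_
      rw [← Finset.mul_sum, hcol j]
    rw [h5, h6, Finset.sum_mul, Finset.sum_mul]
    exact le_of_eq (by ring)
  have hne : {c : ℝ | ∃ P : Fin N → Fin N → ℝ,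
      (∀ i j, 0 ≤ P i j) ∧ (∀ i, ∑ j, P i j = 1 / N) ∧ (∀ j, ∑ i, P i j = 1 / N) ∧
      c = ∑ i, ∑ j, lpNormVec p (v' i - w' j) * P i j}.Nonempty :=
    ⟨_, dW_mem_nonempty p v' w'⟩
  have h8 : discreteWasserstein p v w - δ ≤ discreteWasserstein p v' w' :=
    le_csInf hne (fun c' hc' => sub_le_iff_le_add.mpr (key c' hc'))
  linarith

lemma dW_cont (hp : 1 ≤ p) :
    Continuous fun vw : (Fin N → EuclideanSpace ℝ (Fin k)) ×
        (Fin N → EuclideanSpace ℝ (Fin k)) => discreteWasserstein p vw.1 vw.2 := by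
  rw [continuous_iff_continuousAt]
  intro x₀
  set h : (Fin N → EuclideanSpace ℝ (Fin k)) × (Fin N → EuclideanSpace ℝ (Fin k)) → ℝ :=
    fun vw => (∑ i, lpNormVec p (vw.1 i - x₀.1 i)) * (1 / (N : ℝ))
      + (∑ j, lpNormVec p (x₀.2 j - vw.2 j)) * (1 / (N : ℝ))
      + ((∑ i, lpNormVec p (x₀.1 i - vw.1 i)) * (1 / (N : ℝ))
      + (∑ j, lpNormVec p (vw.2 j - x₀.2 j)) * (1 / (N : ℝ))) with hh
  have hdist : ∀ vw, dist (discreteWasserstein p vw.1 vw.2)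
      (discreteWasserstein p x₀.1 x₀.2) ≤ h vw := by
    intro vw
    rw [Real.dist_eq, abs_sub_le_iff]
    constructor
    · have := dW_shift hp vw.1 x₀.1 vw.2 x₀.2
      have hnn : 0 ≤ (∑ i, lpNormVec p (x₀.1 i - vw.1 i)) * (1 / (N : ℝ))
          + (∑ j, lpNormVec p (vw.2 j - x₀.2 j)) * (1 / (N : ℝ)) := by
        have : ∀ m : ℕ, ∀ f : Fin m → ℝ, (∀ i, 0 ≤ f i) → 0 ≤ (∑ i, f i) * (1 / (m : ℝ)) :=
          fun m f hf => mul_nonneg (Finset.sum_nonneg fun i _ => hf i) (by positivity)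
        exact add_nonneg (this N _ fun i => lpNormVec_nonneg _ _)
          (this N _ fun i => lpNormVec_nonneg _ _)
      rw [hh]; dsimp only; linarith
    · have := dW_shift hp x₀.1 vw.1 x₀.2 vw.2
      have hnn : 0 ≤ (∑ i, lpNormVec p (vw.1 i - x₀.1 i)) * (1 / (N : ℝ))
          + (∑ j, lpNormVec p (x₀.2 j - vw.2 j)) * (1 / (N : ℝ)) := by
        have : ∀ m : ℕ, ∀ f : Fin m → ℝ, (∀ i, 0 ≤ f i) → 0 ≤ (∑ i, f i) * (1 / (m : ℝ)) :=
          fun m f hf => mul_nonneg (Finset.sum_nonneg fun i _ => hf i) (by positivity)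
        exact add_nonneg (this N _ fun i => lpNormVec_nonneg _ _)
          (this N _ fun i => lpNormVec_nonneg _ _)
      rw [hh]; dsimp only; linarith
  have hhcont : Continuous h := by
    rw [hh]
    have hlp : ∀ (g g' : ((Fin N → EuclideanSpace ℝ (Fin k)) ×
        (Fin N → EuclideanSpace ℝ (Fin k))) → Fin N → EuclideanSpace ℝ (Fin k)),
        Continuous g → Continuous g' →
        Continuous fun vw => (∑ i, lpNormVec p (g vw i - g' vw i)) * (1 / (N : ℝ)) := by
      intro g g' hg hg'
      refine Continuous.mul ?_ continuous_const
      refine continuous_finset_sum _ fun i _ => ?_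
      exact (lpNormVec_cont hp).comp (((continuous_apply i).comp hg).sub
        ((continuous_apply i).comp hg'))
    exact ((hlp _ _ continuous_fst continuous_const).add
        (hlp _ _ continuous_const continuous_snd)).add
      ((hlp _ _ continuous_const continuous_fst).add
        (hlp _ _ continuous_snd continuous_const))
  have hh0 : h x₀ = 0 := by
    rw [hh]
    simp [lpNormVec_zero hp]
  rw [ContinuousAt, tendsto_iff_dist_tendsto_zero]
  refine squeeze_zero (fun _ => dist_nonneg) hdist ?_
  have := hhcont.continuousAt (x := x₀)
  rw [ContinuousAt, hh0] at this
  exact this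

lemma dW_le_norms (hp : 1 ≤ p) (v w : Fin N → EuclideanSpace ℝ (Fin k)) :
    discreteWasserstein p v w ≤ (k : ℝ) * (‖v‖ + ‖w‖) := by
  refine (dW_le_diag hp v w).trans ?_
  rcases Nat.eq_zero_or_pos N with hN | hN
  · subst hN
    simp
    positivity
  · have h1 : ∀ i, lpNormVec p (v i - w i) ≤ (k : ℝ) * (‖v‖ + ‖w‖) := by
      intro i
      refine (lpNormVec_le hp _).trans ?_
      refine mul_le_mul_of_nonneg_left ?_ (by positivity)
      exact (norm_sub_le _ _).trans (add_le_add (norm_le_pi_norm v i) (norm_le_pi_norm w i))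
    calc ∑ i, lpNormVec p (v i - w i) * (1 / (N : ℝ))
        ≤ ∑ _i : Fin N, ((k : ℝ) * (‖v‖ + ‖w‖)) * (1 / (N : ℝ)) :=
          Finset.sum_le_sum fun i _ => mul_le_mul_of_nonneg_right (h1 i) (by positivity)
      _ = (k : ℝ) * (‖v‖ + ‖w‖) := by
          rw [Finset.sum_const]
          simp only [Finset.card_univ, Fintype.card_fin, nsmul_eq_mul]
          field_simp

end LpW

attribute [irreducible] discreteWasserstein

lemma suIntegralCont {ny nz nΞ nΘ : ℕ}
    (xS : EuclideanSpace ℝ (Fin nz) → ℝ → EuclideanSpace ℝ (Fin nΞ) →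
        EuclideanSpace ℝ (Fin nΘ) → EuclideanSpace ℝ (Fin ny))
    (hxScont : Continuous (fun w : EuclideanSpace ℝ (Fin nz) × ℝ ×
        EuclideanSpace ℝ (Fin nΞ) × EuclideanSpace ℝ (Fin nΘ) =>
        xS w.1 w.2.1 w.2.2.1 w.2.2.2))
    (CA K : ℝ) (hCA : 0 ≤ CA) (hK0 : 0 ≤ K)
    (hxSb : ∀ z T ξ θ, ‖xS z T ξ θ‖ ≤ CA * ‖z‖ + |T| * K)
    (μSu : Measure (EuclideanSpace ℝ (Fin ny) × EuclideanSpace ℝ (Fin nz)))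
    [IsProbabilityMeasure μSu] (hnormSu : Integrable (fun q => ‖q‖) μSu) :
    Continuous (fun t : ℝ × EuclideanSpace ℝ (Fin nΞ) × EuclideanSpace ℝ (Fin nΘ) =>
      ∫ q, ‖xS q.2 t.1 t.2.1 t.2.2 - q.1‖ ∂μSu) := by
  rw [continuous_iff_continuousAt]
  intro t₀
  set B := |t₀.1| + 1 with hB
  have hB0 : 0 ≤ B := by positivity
  set C := CA + 1 + B * K with hC
  apply MeasureTheory.continuousAt_of_dominated (bound := fun q => C * (1 + ‖q‖))
  · refine Filter.Eventually.of_forall fun t => ?_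
    have hcont : Continuous fun q : EuclideanSpace ℝ (Fin ny) × EuclideanSpace ℝ (Fin nz) =>
        ‖xS q.2 t.1 t.2.1 t.2.2 - q.1‖ :=
      ((hxScont.comp (continuous_snd.prodMk continuous_const)).sub continuous_fst).norm
    exact hcont.aestronglyMeasurable
  · have hev : ∀ᶠ t in nhds t₀, |(t : ℝ × EuclideanSpace ℝ (Fin nΞ) ×
        EuclideanSpace ℝ (Fin nΘ)).1| < B := by
      have hc : Continuous fun t : ℝ × EuclideanSpace ℝ (Fin nΞ) ×
          EuclideanSpace ℝ (Fin nΘ) => |t.1| := continuous_fst.abs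
      exact hc.continuousAt (Iio_mem_nhds (by rw [hB]; linarith))
    refine hev.mono fun t ht => Filter.Eventually.of_forall fun q => ?_
    rw [Real.norm_eq_abs, abs_of_nonneg (norm_nonneg _)]
    have h1 : ‖xS q.2 t.1 t.2.1 t.2.2 - q.1‖
        ≤ (CA * ‖q.2‖ + |t.1| * K) + ‖q.1‖ :=
      (norm_sub_le _ _).trans (add_le_add_left (hxSb q.2 t.1 t.2.1 t.2.2) _)
    have h2 : ‖q.2‖ ≤ ‖q‖ := norm_snd_le q
    have h3 : ‖q.1‖ ≤ ‖q‖ := norm_fst_le q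
    have h4 : |t.1| ≤ B := ht.le
    have h5 : CA * ‖q.2‖ ≤ CA * ‖q‖ := mul_le_mul_of_nonneg_left h2 hCA
    have h6 : |t.1| * K ≤ B * K := mul_le_mul_of_nonneg_right h4 hK0
    have h7 : 0 ≤ B * K * ‖q‖ := by positivity
    rw [hC]
    nlinarith [norm_nonneg q]
  · exact ((integrable_const (1:ℝ)).add hnormSu).const_mul C
  · refine Filter.Eventually.of_forall fun q => ?_
    have hcont : Continuous fun t : ℝ × EuclideanSpace ℝ (Fin nΞ) ×
        EuclideanSpace ℝ (Fin nΘ) => ‖xS q.2 t.1 t.2.1 t.2.2 - q.1‖ :=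
      ((hxScont.comp (continuous_const.prodMk (continuous_fst.prodMk
        (continuous_snd.fst.prodMk continuous_snd.snd)))).sub continuous_const).norm
    exact hcont.continuousAt

lemma unIntegralCont {ny nz nΞ nΘ N np2 nF : ℕ} {p : ℝ} (hp : 1 ≤ p)
    (xS : EuclideanSpace ℝ (Fin nz) → ℝ → EuclideanSpace ℝ (Fin nΞ) →
        EuclideanSpace ℝ (Fin nΘ) → EuclideanSpace ℝ (Fin ny))
    (hxScont : Continuous (fun w : EuclideanSpace ℝ (Fin nz) × ℝ ×
        EuclideanSpace ℝ (Fin nΞ) × EuclideanSpace ℝ (Fin nΘ) =>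
        xS w.1 w.2.1 w.2.2.1 w.2.2.2))
    (CA K : ℝ) (hCA : 0 ≤ CA) (hK0 : 0 ≤ K)
    (hxSb : ∀ z T ξ θ, ‖xS z T ξ θ‖ ≤ CA * ‖z‖ + |T| * K)
    (FP : EuclideanSpace ℝ (Fin ny) → (Fin N → EuclideanSpace ℝ (Fin nF)))
    (hFPcont : Continuous FP) (CFP : ℝ) (hCFP : 0 ≤ CFP)
    (hFPb : ∀ y, ‖FP y‖ ≤ CFP * ‖y‖)
    (Fm : (Fin N → EuclideanSpace ℝ (Fin np2)) → (Fin N → EuclideanSpace ℝ (Fin nF)))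
    (hFmcont : Continuous Fm) (CF : ℝ) (hCF : 0 ≤ CF)
    (hFmb : ∀ y, ‖Fm y‖ ≤ CF * ‖y‖)
    (μUn : Measure (EuclideanSpace ℝ (Fin nz) × (Fin N → EuclideanSpace ℝ (Fin np2))))
    [IsProbabilityMeasure μUn] (hnormUn : Integrable (fun q => ‖q‖) μUn) :
    Continuous (fun t : ℝ × EuclideanSpace ℝ (Fin nΞ) × EuclideanSpace ℝ (Fin nΘ) =>
      ∫ q, discreteWasserstein p (FP (xS q.1 t.1 t.2.1 t.2.2)) (Fm q.2) ∂μUn) := by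
  rw [continuous_iff_continuousAt]
  intro t₀
  set B := |t₀.1| + 1 with hB
  have hB0 : 0 ≤ B := by positivity
  set C := (nF : ℝ) * (CFP * (CA + B * K) + CF) + 1 with hC
  apply MeasureTheory.continuousAt_of_dominated (bound := fun q => C * (1 + ‖q‖))
  · refine Filter.Eventually.of_forall fun t => ?_
    have hcont : Continuous fun q : EuclideanSpace ℝ (Fin nz) ×
        (Fin N → EuclideanSpace ℝ (Fin np2)) =>
        discreteWasserstein p (FP (xS q.1 t.1 t.2.1 t.2.2)) (Fm q.2) :=
      (dW_cont hp).comp ((hFPcont.comp (hxScont.comp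
        (continuous_fst.prodMk continuous_const))).prodMk
        (hFmcont.comp continuous_snd))
    exact hcont.aestronglyMeasurable
  · have hev : ∀ᶠ t in nhds t₀, |(t : ℝ × EuclideanSpace ℝ (Fin nΞ) ×
        EuclideanSpace ℝ (Fin nΘ)).1| < B := by
      have hc : Continuous fun t : ℝ × EuclideanSpace ℝ (Fin nΞ) ×
          EuclideanSpace ℝ (Fin nΘ) => |t.1| := continuous_fst.abs
      exact hc.continuousAt (Iio_mem_nhds (by rw [hB]; linarith))
    refine hev.mono fun t ht => Filter.Eventually.of_forall fun q => ?_
    have hd0 := dW_nonneg p (FP (xS q.1 t.1 t.2.1 t.2.2)) (Fm q.2)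
    rw [Real.norm_eq_abs, abs_of_nonneg hd0]
    refine (dW_le_norms hp _ _).trans ?_
    have h2 : ‖q.1‖ ≤ ‖q‖ := norm_fst_le q
    have h3 : ‖q.2‖ ≤ ‖q‖ := norm_snd_le q
    have h4 : |t.1| ≤ B := ht.le
    have h5 : ‖xS q.1 t.1 t.2.1 t.2.2‖ ≤ CA * ‖q‖ + B * K := by
      refine (hxSb q.1 t.1 t.2.1 t.2.2).trans ?_
      have h6 : CA * ‖q.1‖ ≤ CA * ‖q‖ := mul_le_mul_of_nonneg_left h2 hCA
      have h7 : |t.1| * K ≤ B * K := mul_le_mul_of_nonneg_right h4 hK0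
      linarith
    have hv : ‖FP (xS q.1 t.1 t.2.1 t.2.2)‖ ≤ CFP * (CA * ‖q‖ + B * K) :=
      (hFPb _).trans (mul_le_mul_of_nonneg_left h5 hCFP)
    have hw : ‖Fm q.2‖ ≤ CF * ‖q‖ :=
      (hFmb _).trans (mul_le_mul_of_nonneg_left h3 hCF)
    have h8 : ‖FP (xS q.1 t.1 t.2.1 t.2.2)‖ + ‖Fm q.2‖
        ≤ CFP * (CA * ‖q‖ + B * K) + CF * ‖q‖ := add_le_add hv hw
    refine (mul_le_mul_of_nonneg_left h8 (Nat.cast_nonneg nF)).trans ?_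
    rw [hC]
    have hq0 : (0:ℝ) ≤ ‖q‖ := norm_nonneg q
    have hnF0 : (0:ℝ) ≤ (nF : ℝ) := Nat.cast_nonneg nF
    nlinarith [mul_nonneg (mul_nonneg hnF0 hCFP) (mul_nonneg (mul_nonneg hB0 hK0) hq0),
      mul_nonneg (mul_nonneg hnF0 hCFP) (mul_nonneg hCA hq0),
      mul_nonneg (mul_nonneg hnF0 hCFP) (mul_nonneg hB0 hK0),
      mul_nonneg (mul_nonneg hnF0 hCFP) hCA,
      mul_nonneg hnF0 hCF,
      mul_nonneg (mul_nonneg hnF0 hCF) hq0]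
  · exact ((integrable_const (1:ℝ)).add hnormUn).const_mul C
  · refine Filter.Eventually.of_forall fun q => ?_
    have hcont : Continuous fun t : ℝ × EuclideanSpace ℝ (Fin nΞ) ×
        EuclideanSpace ℝ (Fin nΘ) =>
        discreteWasserstein p (FP (xS q.1 t.1 t.2.1 t.2.2)) (Fm q.2) :=
      (dW_cont hp).comp ((hFPcont.comp (hxScont.comp
        (continuous_const.prodMk (continuous_fst.prodMk
          (continuous_snd.fst.prodMk continuous_snd.snd))))).prodMk continuous_const)
    exact hcont.continuousAt

/-- Existence of minimizers for the discretized shared prior learning problem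
with the explicit forward Euler scheme: the cost functional built from the
terminal iterate `x_S` of the `S`-step explicit Euler discretization of the
gradient flow attains its infimum over `Γ = [0,T_max]² × Ξ² × Θ`. -/
theorem discretized_shared_prior_learning_exists_minimizer_explicit_euler
    (ny nz nΞ nΘ N np2 nF : ℕ) (S : ℕ) (hS : 0 < S)
    (α : ℝ) (hα : α ∈ Icc (0:ℝ) 1) (p : ℝ) (hp : 1 ≤ p)
    (Tmax : ℝ) (hT : 0 < Tmax)
    (Ξ : Set (EuclideanSpace ℝ (Fin nΞ))) (hΞ : IsCompact Ξ) (hΞne : Ξ.Nonempty)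
    (Θ : Set (EuclideanSpace ℝ (Fin nΘ))) (hΘ : IsCompact Θ) (hΘne : Θ.Nonempty)
    (A : EuclideanSpace ℝ (Fin ny) →L[ℝ] EuclideanSpace ℝ (Fin nz))
    (Ainit : EuclideanSpace ℝ (Fin nz) →ₗ[ℝ] EuclideanSpace ℝ (Fin ny))
    (P : EuclideanSpace ℝ (Fin ny) →ₗ[ℝ] (Fin N → EuclideanSpace ℝ (Fin np2)))
    (F : (Fin N → EuclideanSpace ℝ (Fin np2)) →ₗ[ℝ] (Fin N → EuclideanSpace ℝ (Fin nF)))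
    (D : EuclideanSpace ℝ (Fin nz) × EuclideanSpace ℝ (Fin nz) ×
        EuclideanSpace ℝ (Fin nΞ) → ℝ)
    (hD : ContDiff ℝ 1 D) (hDsupp : HasCompactSupport D) (hDpos : ∀ q, 0 ≤ D q)
    (R : EuclideanSpace ℝ (Fin ny) × EuclideanSpace ℝ (Fin nΘ) → ℝ)
    (hR : ContDiff ℝ 1 R) (hRsupp : HasCompactSupport R)
    (xS : EuclideanSpace ℝ (Fin nz) → ℝ → EuclideanSpace ℝ (Fin nΞ) →
        EuclideanSpace ℝ (Fin nΘ) → EuclideanSpace ℝ (Fin ny))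
    (hxS : ∀ z T ξ θ, xS z T ξ θ =
      (fun x : EuclideanSpace ℝ (Fin ny) => x - (T / S) •
          ((ContinuousLinearMap.adjoint A) (gradient (fun u => D (u, z, ξ)) (A x)) +
            gradient (fun u => R (u, θ)) x))^[S] (Ainit z))
    (μSu : Measure (EuclideanSpace ℝ (Fin ny) × EuclideanSpace ℝ (Fin nz)))
    [IsProbabilityMeasure μSu] (hmomSu : Integrable (fun q => ‖q‖ ^ 2) μSu)
    (μUn : Measure (EuclideanSpace ℝ (Fin nz) × (Fin N → EuclideanSpace ℝ (Fin np2))))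
    [IsProbabilityMeasure μUn] (hmomUn : Integrable (fun q => ‖q‖ ^ 2) μUn)
    (J : ℝ × ℝ × EuclideanSpace ℝ (Fin nΞ) × EuclideanSpace ℝ (Fin nΞ) ×
        EuclideanSpace ℝ (Fin nΘ) → ℝ)
    (hJ : ∀ TSu TUn ξSu ξUn θ, J (TSu, TUn, ξSu, ξUn, θ) =
      α * (∫ q, ‖xS q.2 TSu ξSu θ - q.1‖ ∂μSu) +
        (1 - α) * (∫ q, discreteWasserstein p (F (P (xS q.1 TUn ξUn θ))) (F q.2) ∂μUn)) :
    ∃ γ ∈ (Icc (0:ℝ) Tmax ×ˢ Icc (0:ℝ) Tmax ×ˢ Ξ ×ˢ Ξ ×ˢ Θ),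
      ∀ γ' ∈ (Icc (0:ℝ) Tmax ×ˢ Icc (0:ℝ) Tmax ×ˢ Ξ ×ˢ Ξ ×ˢ Θ), J γ ≤ J γ' := by
  classical
  set Ai := LinearMap.toContinuousLinearMap Ainit with hAi
  have hAc : Continuous fun z : EuclideanSpace ℝ (Fin nz) => Ainit z := by
    have h := Ai.continuous
    rw [hAi] at h
    simpa [LinearMap.coe_toContinuousLinearMap'] using h
  obtain ⟨CD, hCD0, hCD⟩ := gradPartialBound D hD hDsupp
  obtain ⟨CR, hCR0, hCR⟩ := gradPartialBound R hR hRsupp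
  set K := ‖ContinuousLinearMap.adjoint A‖ * CD + CR with hK
  have hK0 : 0 ≤ K := by positivity
  -- joint continuity of xS
  have hxScont : Continuous (fun w : EuclideanSpace ℝ (Fin nz) × ℝ ×
      EuclideanSpace ℝ (Fin nΞ) × EuclideanSpace ℝ (Fin nΘ) =>
      xS w.1 w.2.1 w.2.2.1 w.2.2.2) := by
    have heq : (fun w : EuclideanSpace ℝ (Fin nz) × ℝ ×
        EuclideanSpace ℝ (Fin nΞ) × EuclideanSpace ℝ (Fin nΘ) =>
        xS w.1 w.2.1 w.2.2.1 w.2.2.2)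
        = fun w => (fun x : EuclideanSpace ℝ (Fin ny) => x - (w.2.1 / (S : ℝ)) •
            ((ContinuousLinearMap.adjoint A)
              (gradient (fun u => D (u, w.1, w.2.2.1)) (A x)) +
              gradient (fun u => R (u, w.2.2.2)) x))^[S] (Ainit w.1) :=
      funext fun w => hxS w.1 w.2.1 w.2.2.1 w.2.2.2
    rw [heq]
    exact eulerIterCont S S A D hD R hR (fun z => Ainit z) hAc
  -- bound for xS
  have hxSb : ∀ z T ξ θ, ‖xS z T ξ θ‖ ≤ ‖Ai‖ * ‖z‖ + |T| * K := by
    intro z T ξ θ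
    rw [hxS z T ξ θ]
    set f := fun x : EuclideanSpace ℝ (Fin ny) => x - (T / (S : ℝ)) •
        ((ContinuousLinearMap.adjoint A) (gradient (fun u => D (u, z, ξ)) (A x)) +
          gradient (fun u => R (u, θ)) x) with hf
    have hb := eulerIterBound S hS A D R CD CR hCD hCR z T ξ θ (Ainit z) S
    have hS0 : (S : ℝ) ≠ 0 := Nat.cast_ne_zero.mpr hS.ne'
    have hSK : (S : ℝ) * ((|T| / (S : ℝ)) * K) = |T| * K := by
      field_simp
    have h1 : ‖f^[S] (Ainit z)‖ ≤ ‖f^[S] (Ainit z) - Ainit z‖ + ‖Ainit z‖ := by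
      have h : f^[S] (Ainit z) = (f^[S] (Ainit z) - Ainit z) + Ainit z := by abel
      nth_rewrite 1 [h]
      exact norm_add_le _ _
    have h2 : ‖Ainit z‖ ≤ ‖Ai‖ * ‖z‖ := by
      have h := Ai.le_opNorm z
      rw [hAi] at h
      simpa [LinearMap.coe_toContinuousLinearMap'] using h
    calc ‖f^[S] (Ainit z)‖ ≤ ‖f^[S] (Ainit z) - Ainit z‖ + ‖Ainit z‖ := h1
      _ ≤ (S : ℝ) * ((|T| / (S : ℝ)) * K) + ‖Ai‖ * ‖z‖ := add_le_add hb h2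
      _ = ‖Ai‖ * ‖z‖ + |T| * K := by rw [hSK]; ring
  -- integrability of the norms
  have hnormSu : Integrable (fun q => ‖q‖) μSu := by
    refine Integrable.mono' ((integrable_const (1:ℝ)).add hmomSu)
      continuous_norm.aestronglyMeasurable (Filter.Eventually.of_forall fun q => ?_)
    rw [Real.norm_eq_abs, abs_of_nonneg (norm_nonneg q)]
    show ‖q‖ ≤ 1 + ‖q‖ ^ 2
    nlinarith [sq_nonneg (‖q‖ - 1), norm_nonneg q]
  have hnormUn : Integrable (fun q => ‖q‖) μUn := by
    refine Integrable.mono' ((integrable_const (1:ℝ)).add hmomUn)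
      continuous_norm.aestronglyMeasurable (Filter.Eventually.of_forall fun q => ?_)
    rw [Real.norm_eq_abs, abs_of_nonneg (norm_nonneg q)]
    show ‖q‖ ≤ 1 + ‖q‖ ^ 2
    nlinarith [sq_nonneg (‖q‖ - 1), norm_nonneg q]
  -- continuity of the supervised integral
  have hG1 := suIntegralCont xS hxScont ‖Ai‖ K (norm_nonneg Ai) hK0 hxSb μSu hnormSu
  -- the composite feature map
  set Fc := LinearMap.toContinuousLinearMap F with hFc
  set Pc := LinearMap.toContinuousLinearMap P with hPc
  have hFPcont : Continuous fun y : EuclideanSpace ℝ (Fin ny) => F (P y) := by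
    have h1 := Fc.continuous
    have h2 := Pc.continuous
    rw [hFc] at h1; rw [hPc] at h2
    simp only [LinearMap.coe_toContinuousLinearMap'] at h1 h2
    exact h1.comp h2
  have hFcont : Continuous fun y : Fin N → EuclideanSpace ℝ (Fin np2) => F y := by
    have h1 := Fc.continuous
    rw [hFc] at h1
    simpa [LinearMap.coe_toContinuousLinearMap'] using h1
  have hFPb : ∀ y, ‖F (P y)‖ ≤ (‖Fc‖ * ‖Pc‖) * ‖y‖ := by
    intro y
    have h1 := Fc.le_opNorm (Pc y)
    have h2 := Pc.le_opNorm y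
    have h3 : Pc y = P y := by rw [hPc]; simp [LinearMap.coe_toContinuousLinearMap']
    have h4 : Fc (Pc y) = F (P y) := by
      rw [hFc, h3]; simp [LinearMap.coe_toContinuousLinearMap']
    rw [h4, h3] at h1
    calc ‖F (P y)‖ ≤ ‖Fc‖ * ‖P y‖ := h1
      _ ≤ ‖Fc‖ * (‖Pc‖ * ‖y‖) := by
          rw [← h3]
          exact mul_le_mul_of_nonneg_left h2 (norm_nonneg _)
      _ = (‖Fc‖ * ‖Pc‖) * ‖y‖ := by ring
  have hFb : ∀ y, ‖F y‖ ≤ ‖Fc‖ * ‖y‖ := by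
    intro y
    have h1 := Fc.le_opNorm y
    have h4 : Fc y = F y := by rw [hFc]; simp [LinearMap.coe_toContinuousLinearMap']
    rwa [h4] at h1
  -- continuity of the unsupervised integral
  have hG2 := unIntegralCont hp xS hxScont ‖Ai‖ K (norm_nonneg Ai) hK0 hxSb
    (fun y => F (P y)) hFPcont (‖Fc‖ * ‖Pc‖) (by positivity) hFPb
    (fun y => F y) hFcont ‖Fc‖ (norm_nonneg Fc) hFb μUn hnormUn
  -- continuity of J
  have hproj1 : Continuous (fun γ : ℝ × ℝ × EuclideanSpace ℝ (Fin nΞ) ×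
      EuclideanSpace ℝ (Fin nΞ) × EuclideanSpace ℝ (Fin nΘ) =>
      ((γ.1, γ.2.2.1, γ.2.2.2.2) : ℝ × EuclideanSpace ℝ (Fin nΞ) ×
        EuclideanSpace ℝ (Fin nΘ))) :=
    continuous_fst.prodMk (continuous_snd.snd.fst.prodMk continuous_snd.snd.snd.snd)
  have hproj2 : Continuous (fun γ : ℝ × ℝ × EuclideanSpace ℝ (Fin nΞ) ×
      EuclideanSpace ℝ (Fin nΞ) × EuclideanSpace ℝ (Fin nΘ) =>
      ((γ.2.1, γ.2.2.2.1, γ.2.2.2.2) : ℝ × EuclideanSpace ℝ (Fin nΞ) ×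
        EuclideanSpace ℝ (Fin nΘ))) :=
    continuous_snd.fst.prodMk (continuous_snd.snd.snd.fst.prodMk continuous_snd.snd.snd.snd)
  have hJeq : J = fun γ : ℝ × ℝ × EuclideanSpace ℝ (Fin nΞ) × EuclideanSpace ℝ (Fin nΞ) ×
      EuclideanSpace ℝ (Fin nΘ) =>
      α * (fun t : ℝ × EuclideanSpace ℝ (Fin nΞ) × EuclideanSpace ℝ (Fin nΘ) =>
          ∫ q, ‖xS q.2 t.1 t.2.1 t.2.2 - q.1‖ ∂μSu) (γ.1, γ.2.2.1, γ.2.2.2.2) +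
        (1 - α) * (fun t : ℝ × EuclideanSpace ℝ (Fin nΞ) × EuclideanSpace ℝ (Fin nΘ) =>
          ∫ q, discreteWasserstein p (F (P (xS q.1 t.1 t.2.1 t.2.2))) (F q.2) ∂μUn)
          (γ.2.1, γ.2.2.2.1, γ.2.2.2.2) := by
    funext γ
    obtain ⟨a, b, c, d, e⟩ := γ
    exact hJ a b c d e
  have hJcont : Continuous J := by
    rw [hJeq]
    exact (continuous_const.mul (hG1.comp hproj1)).add
      (continuous_const.mul (hG2.comp hproj2))
  -- the compact set
  have hΓc : IsCompact (Icc (0:ℝ) Tmax ×ˢ Icc (0:ℝ) Tmax ×ˢ Ξ ×ˢ Ξ ×ˢ Θ) :=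
    isCompact_Icc.prod (isCompact_Icc.prod (hΞ.prod (hΞ.prod hΘ)))
  obtain ⟨ξ₀, hξ₀⟩ := hΞne
  obtain ⟨θ₀, hθ₀⟩ := hΘne
  have hΓne : (Icc (0:ℝ) Tmax ×ˢ Icc (0:ℝ) Tmax ×ˢ Ξ ×ˢ Ξ ×ˢ Θ).Nonempty :=
    ⟨(0, 0, ξ₀, ξ₀, θ₀), by
      refine ⟨⟨le_refl _, hT.le⟩, ⟨le_refl _, hT.le⟩, hξ₀, hξ₀, hθ₀⟩⟩
  obtain ⟨γ, hγ, hmin⟩ := hΓc.exists_isMinOn hΓne hJcont.continuousOn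
  exact ⟨γ, hγ, fun γ' hγ' => hmin hγ'⟩
end

section
/- Convergence of affine interpolants of explicit Euler trajectories with converging parameters: let f : ℝ^n × ℝ^d → ℝ^n be continuously differentiable with compact support, let p^S → p in ℝ^d, and fix x₀ ∈ ℝ^n. Let X : [0,1] → ℝ^n be the unique solution of X'(t) = f(X(t), p) with X(0) = x₀, and for each S ∈ ℕ define the Euler iterates x^S_0 = x₀, x^S_{s+1} = x^S_s + (1/S) f(x^S_s, p^S) for s = 0,…,S−1, together with the piecewise affine interpolation I^S : [0,1] → ℝ^n defined by I^S(t) = (s+1−St) x^S_s + (St−s) x^S_{s+1} for t ∈ [s/S, (s+1)/S). Then ∫₀¹ ‖I^S(t) − X(t)‖₂² dt → 0 as S → ∞, and moreover max_{0 ≤ s ≤ S} ‖x^S_s − X(s/S)‖₂ → 0. -/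
open Set Filter intervalIntegral

/-- Explicit Euler iterates `x₀, x₁, …` for the parametrized vector field
`x ↦ f (x, q)` with step size `1/S`. -/
noncomputable def eulerIter {E F : Type*} [NormedAddCommGroup E] [NormedSpace ℝ E]
    (f : E × F → E) (x₀ : E) (S : ℕ) (q : F) : ℕ → E :=
  fun s => (fun x => x + (1 / (S : ℝ)) • f (x, q))^[s] x₀

/-- Piecewise affine interpolation of a sequence `y` at the nodes `s/S`:
`I(t) = (s+1−St) y_s + (St−s) y_{s+1}` for `t ∈ [s/S, (s+1)/S)`. -/
noncomputable def affineInterp {E : Type*} [AddCommGroup E] [Module ℝ E]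
    (S : ℕ) (y : ℕ → E) (t : ℝ) : E :=
  ((⌊(S : ℝ) * t⌋₊ : ℝ) + 1 - S * t) • y ⌊(S : ℝ) * t⌋₊ +
    ((S : ℝ) * t - (⌊(S : ℝ) * t⌋₊ : ℝ)) • y (⌊(S : ℝ) * t⌋₊ + 1)

lemma euler_node_bound
    {n d : ℕ}
    {f : EuclideanSpace ℝ (Fin n) × EuclideanSpace ℝ (Fin d) → EuclideanSpace ℝ (Fin n)}
    {p q : EuclideanSpace ℝ (Fin d)}
    {x₀ : EuclideanSpace ℝ (Fin n)} {X : ℝ → EuclideanSpace ℝ (Fin n)}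
    {L M : ℝ} (hL : 1 ≤ L) (hM : 0 ≤ M)
    (hfc : Continuous f)
    (hlip : ∀ u v, ‖f u - f v‖ ≤ L * ‖u - v‖)
    (hfM : ∀ x, ‖f x‖ ≤ M)
    (hX0 : X 0 = x₀)
    (hX : ∀ t ∈ Icc (0:ℝ) 1, HasDerivAt X (f (X t, p)) t)
    {S : ℕ} (hS : 1 ≤ S) :
    ∀ s ≤ S, ‖eulerIter f x₀ S q s - X (s / S)‖
      ≤ L * (‖q - p‖ + M / S) * Real.exp L := by
  have hL0 : (0:ℝ) < L := lt_of_lt_of_le one_pos hL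
  have hS0 : (0:ℝ) < S := by exact_mod_cast hS
  set δ : ℝ := L * (‖q - p‖ + M / S) with hδdef
  have hδ0 : 0 ≤ δ := by positivity
  set c : ℝ := 1 + L / S with hcdef
  have hc1 : 1 ≤ c := by
    have : 0 ≤ L / S := by positivity
    simp [hcdef]; positivity
  have hXc : ContinuousOn X (Icc 0 1) :=
    fun t ht => ((hX t ht).continuousAt).continuousWithinAt
  have hXlip : ∀ a ∈ Icc (0:ℝ) 1, ∀ b ∈ Icc (0:ℝ) 1, ‖X b - X a‖ ≤ M * |b - a| := by
    intro a ha b hb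
    have := Convex.norm_image_sub_le_of_norm_hasDerivWithin_le
      (f := X) (f' := fun t => f (X t, p)) (s := Icc (0:ℝ) 1)
      (fun t ht => (hX t ht).hasDerivWithinAt) (fun t ht => hfM _) (convex_Icc 0 1) ha hb
    simpa [Real.norm_eq_abs] using this
  -- main induction
  have main : ∀ s : ℕ, s ≤ S →
      ‖eulerIter f x₀ S q s - X (s / S)‖ ≤ δ * s / S * c ^ s := by
    intro s
    induction s with
    | zero => intro _; simp [eulerIter, hX0]
    | succ s ih =>
      intro hs1
      have hs : s ≤ S := Nat.le_of_succ_le hs1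
      have ihs := ih hs
      set x : ℕ → EuclideanSpace ℝ (Fin n) := eulerIter f x₀ S q with hxdef
      set a : ℝ := s / S with hadef
      set b : ℝ := (s + 1 : ℕ) / S with hbdef
      have hba : b - a = 1 / S := by
        rw [hadef, hbdef]; push_cast; field_simp; ring
      have hab : a ≤ b := by
        rw [hadef, hbdef]; push_cast; gcongr; linarith
      have ha01 : a ∈ Icc (0:ℝ) 1 := by
        constructor
        · rw [hadef]; positivity
        · rw [hadef]
          rw [div_le_one hS0]
          exact_mod_cast hs
      have hb01 : b ∈ Icc (0:ℝ) 1 := by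
        constructor
        · rw [hbdef]; positivity
        · rw [hbdef]
          rw [div_le_one hS0]
          exact_mod_cast hs1
      have hsub : Icc a b ⊆ Icc (0:ℝ) 1 := Icc_subset_Icc ha01.1 hb01.2
      have hcont : ContinuousOn (fun t => f (X t, p)) (Icc a b) :=
        hfc.comp_continuousOn ((hXc.mono hsub).prodMk continuousOn_const)
      have hFTC : (∫ t in a..b, f (X t, p)) = X b - X a := by
        apply intervalIntegral.integral_eq_sub_of_hasDerivAt
        · intro t ht
          rw [uIcc_of_le hab] at ht
          exact hX t (hsub ht)
        · rw [← uIcc_of_le hab] at hcont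
          exact hcont.intervalIntegrable
      have hstep : x (s+1) = x s + (1 / (S:ℝ)) • f (x s, q) := by
        simp [hxdef, eulerIter, Function.iterate_succ_apply']
      have hdecomp : x (s+1) - X b
          = (x s - X a) + ∫ t in a..b, (f (x s, q) - f (X t, p)) := by
        have hint : IntervalIntegrable (fun t => f (X t, p)) MeasureTheory.volume a b := by
          rw [← uIcc_of_le hab] at hcont
          exact hcont.intervalIntegrable
        rw [intervalIntegral.integral_sub intervalIntegrable_const hint,
          hFTC, intervalIntegral.integral_const, hba, hstep]
        abel
      have hE := ihs
      set E : ℝ := ‖x s - X a‖ with hEdef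
      have hIbound : ‖∫ t in a..b, (f (x s, q) - f (X t, p))‖
          ≤ (L * (E + M / S + ‖q - p‖)) * |b - a| := by
        apply intervalIntegral.norm_integral_le_of_norm_le_const
        intro t ht
        rw [uIoc_of_le hab] at ht
        have ht01 : t ∈ Icc (0:ℝ) 1 := hsub (Ioc_subset_Icc_self ht)
        have h1 : ‖f (x s, q) - f (X t, p)‖ ≤ L * ‖((x s, q) : _ × _) - (X t, p)‖ :=
          hlip _ _
        have h2 : ‖((x s, q) : _ × _) - (X t, p)‖ ≤ ‖x s - X t‖ + ‖q - p‖ := by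
          rw [Prod.mk_sub_mk, Prod.norm_def]
          exact max_le (le_add_of_nonneg_right (norm_nonneg _))
            (le_add_of_nonneg_left (norm_nonneg _))
        have h3 : ‖x s - X t‖ ≤ E + M / S := by
          have h4 : ‖X t - X a‖ ≤ M * |t - a| := hXlip a ha01 t ht01
          have h5 : |t - a| ≤ 1 / S := by
            rw [abs_of_nonneg (by linarith [ht.1])]
            have := ht.2
            linarith [hba]
          have h6 : M * |t - a| ≤ M * (1 / S) := by gcongr
          calc ‖x s - X t‖ = ‖(x s - X a) - (X t - X a)‖ := by abel_nf
            _ ≤ ‖x s - X a‖ + ‖X t - X a‖ := norm_sub_le _ _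
            _ ≤ E + M / S := by rw [hEdef]; have := h4.trans h6; rw [mul_one_div] at this; linarith
        calc ‖f (x s, q) - f (X t, p)‖ ≤ L * (‖x s - X t‖ + ‖q - p‖) := by
              exact h1.trans (mul_le_mul_of_nonneg_left h2 hL0.le)
          _ ≤ L * (E + M / S + ‖q - p‖) := by gcongr
      have habs : |b - a| = 1 / S := by rw [hba]; exact abs_of_pos (by positivity)
      have hcpow : (1:ℝ) ≤ c ^ (s+1) := one_le_pow₀ hc1
      have hkey : ‖x (s+1) - X b‖ ≤ c * E + δ / S := by
        calc ‖x (s+1) - X b‖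
            ≤ E + (L * (E + M / S + ‖q - p‖)) * |b - a| := by
              rw [hdecomp]
              exact (norm_add_le _ _).trans (by rw [hEdef]; exact add_le_add_right hIbound _)
          _ = c * E + δ / S := by
              rw [habs, hcdef, hδdef]; field_simp; ring
      have hq : δ * (↑(s+1) : ℝ) / S * c ^ (s+1)
          = δ * s / S * c ^ (s+1) + δ / S * c ^ (s+1) := by push_cast; ring
      have h1 : c * E ≤ δ * s / S * c ^ (s+1) := by
        have : c * E ≤ c * (δ * s / S * c ^ s) := by
          have hc0 : (0:ℝ) ≤ c := by linarith
          gcongr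
        calc c * E ≤ c * (δ * s / S * c ^ s) := this
          _ = δ * s / S * c ^ (s+1) := by ring
      have h2 : δ / S ≤ δ / S * c ^ (s+1) :=
        le_mul_of_one_le_right (by positivity) hcpow
      calc ‖x (s+1) - X (↑(s+1) / S)‖ = ‖x (s+1) - X b‖ := by rw [hbdef]
        _ ≤ c * E + δ / S := hkey
        _ ≤ δ * (↑(s+1) : ℝ) / S * c ^ (s+1) := by rw [hq]; linarith
  -- conclude
  intro s hs
  have h1 := main s hs
  have hcs : c ^ s ≤ Real.exp L := by
    have e1 : c ^ s ≤ c ^ S := pow_le_pow_right₀ hc1 hs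
    have e2 : c ≤ Real.exp (L / S) := by
      rw [hcdef, add_comm]
      exact Real.add_one_le_exp _
    have e3 : c ^ S ≤ (Real.exp (L / S)) ^ S :=
      pow_le_pow_left₀ (by linarith) e2 S
    have e4 : (Real.exp (L / S)) ^ S = Real.exp L := by
      rw [← Real.exp_nat_mul]
      congr 1
      field_simp
    linarith
  have hsS : (s : ℝ) / S ≤ 1 := by
    rw [div_le_one hS0]; exact_mod_cast hs
  have hss : (0:ℝ) ≤ (s : ℝ) / S := by positivity
  have hcs0 : (0:ℝ) ≤ c ^ s := by positivity
  have e5 : δ * (s:ℝ) / S ≤ δ := by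
    have e6 : δ * (s:ℝ) ≤ δ * S := by gcongr
    calc δ * (s:ℝ) / S ≤ δ * (S:ℝ) / S := by gcongr
      _ = δ := by field_simp
  exact h1.trans (mul_le_mul e5 hcs hcs0 hδ0)

lemma affineInterp_err_bound
    {E : Type*} [NormedAddCommGroup E] [NormedSpace ℝ E]
    {y : ℕ → E} {X : ℝ → E}
    {S : ℕ} (hS : 1 ≤ S) {E₀ M : ℝ} (hE₀ : 0 ≤ E₀) (hM : 0 ≤ M)
    (hnode : ∀ s ≤ S, ‖y s - X ((s:ℝ) / S)‖ ≤ E₀)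
    (hXlip : ∀ a ∈ Icc (0:ℝ) 1, ∀ b ∈ Icc (0:ℝ) 1, ‖X b - X a‖ ≤ M * |b - a|)
    {t : ℝ} (ht : t ∈ Icc (0:ℝ) 1) :
    ‖affineInterp S y t - X t‖ ≤ E₀ + M / S := by
  have hS0 : (0:ℝ) < S := by exact_mod_cast hS
  set s : ℕ := ⌊(S : ℝ) * t⌋₊ with hsdef
  have hu0 : 0 ≤ (S:ℝ) * t := mul_nonneg hS0.le ht.1
  have hfl : (s:ℝ) ≤ (S:ℝ) * t := Nat.floor_le hu0
  have hfl' : (S:ℝ) * t < (s:ℝ) + 1 := Nat.lt_floor_add_one _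
  have hMS : 0 ≤ M / S := by positivity
  by_cases hcase : s < S
  · -- interior case
    have hs1S : s + 1 ≤ S := hcase
    have ha : (s:ℝ) / S ∈ Icc (0:ℝ) 1 := by
      constructor
      · positivity
      · rw [div_le_one hS0]; exact_mod_cast le_of_lt hcase
    have hb : ((s:ℝ) + 1) / S ∈ Icc (0:ℝ) 1 := by
      constructor
      · positivity
      · rw [div_le_one hS0]; exact_mod_cast hs1S
    have hts : (s:ℝ) / S ≤ t := by
      rw [div_le_iff₀ hS0]; linarith [hfl]
    have hts' : t ≤ ((s:ℝ) + 1) / S := by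
      rw [le_div_iff₀ hS0]; nlinarith [hfl']
    have h1 : ‖y s - X t‖ ≤ E₀ + M / S := by
      have e1 : ‖X t - X ((s:ℝ)/S)‖ ≤ M * |t - (s:ℝ)/S| := hXlip _ ha t ht
      have e2 : |t - (s:ℝ)/S| ≤ 1 / S := by
        rw [abs_of_nonneg (by linarith)]
        have : ((s:ℝ)+1)/S - (s:ℝ)/S = 1/S := by field_simp; ring
        linarith
      have e3 : M * |t - (s:ℝ)/S| ≤ M * (1/S) := by gcongr
      calc ‖y s - X t‖ = ‖(y s - X ((s:ℝ)/S)) - (X t - X ((s:ℝ)/S))‖ := by abel_nf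
        _ ≤ ‖y s - X ((s:ℝ)/S)‖ + ‖X t - X ((s:ℝ)/S)‖ := norm_sub_le _ _
        _ ≤ E₀ + M / S := by
            have := hnode s (le_of_lt hcase)
            rw [mul_one_div] at e3
            linarith
    have h2 : ‖y (s+1) - X t‖ ≤ E₀ + M / S := by
      have e1 : ‖X t - X (((s:ℝ)+1)/S)‖ ≤ M * |t - ((s:ℝ)+1)/S| := hXlip _ hb t ht
      have e2 : |t - ((s:ℝ)+1)/S| ≤ 1 / S := by
        rw [abs_of_nonpos (by linarith)]
        have : ((s:ℝ)+1)/S - (s:ℝ)/S = 1/S := by field_simp; ring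
        linarith
      have e3 : M * |t - ((s:ℝ)+1)/S| ≤ M * (1/S) := by gcongr
      have hnode' := hnode (s+1) hs1S
      have hcast : ((s+1 : ℕ) : ℝ) = (s:ℝ) + 1 := by push_cast; ring
      rw [hcast] at hnode'
      calc ‖y (s+1) - X t‖
          = ‖(y (s+1) - X (((s:ℝ)+1)/S)) - (X t - X (((s:ℝ)+1)/S))‖ := by abel_nf
        _ ≤ ‖y (s+1) - X (((s:ℝ)+1)/S)‖ + ‖X t - X (((s:ℝ)+1)/S)‖ := norm_sub_le _ _
        _ ≤ E₀ + M / S := by rw [mul_one_div] at e3; linarith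
    set aa : ℝ := (s:ℝ) + 1 - (S:ℝ) * t with haadef
    set bb : ℝ := (S:ℝ) * t - (s:ℝ) with hbbdef
    have haa0 : 0 ≤ aa := by rw [haadef]; linarith
    have hbb0 : 0 ≤ bb := by rw [hbbdef]; linarith
    have habsum : aa + bb = 1 := by rw [haadef, hbbdef]; ring
    have hXt : aa • X t + bb • X t = X t := by
      rw [← add_smul, habsum, one_smul]
    have hdecomp : aa • (y s - X t) + bb • (y (s+1) - X t)
        = affineInterp S y t - X t := by
      calc aa • (y s - X t) + bb • (y (s+1) - X t)
          = aa • y s + bb • y (s+1) - (aa • X t + bb • X t) := by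
            rw [smul_sub, smul_sub]; abel
        _ = affineInterp S y t - X t := by
            rw [hXt, affineInterp, ← hsdef, ← haadef, ← hbbdef]
    calc ‖affineInterp S y t - X t‖
        ≤ ‖aa • (y s - X t)‖ + ‖bb • (y (s+1) - X t)‖ := by
          rw [← hdecomp]; exact norm_add_le _ _
      _ = aa * ‖y s - X t‖ + bb * ‖y (s+1) - X t‖ := by
          rw [norm_smul, norm_smul, Real.norm_eq_abs, Real.norm_eq_abs,
            abs_of_nonneg haa0, abs_of_nonneg hbb0]
      _ ≤ aa * (E₀ + M/S) + bb * (E₀ + M/S) := by gcongr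
      _ = E₀ + M / S := by rw [← add_mul, habsum, one_mul]
  · -- t = 1 case
    push_neg at hcase
    have hsS : (S:ℝ) ≤ (s:ℝ) := by exact_mod_cast hcase
    have htS : (S:ℝ) * t ≤ S := by nlinarith [ht.2]
    have hseq : (s:ℝ) = (S:ℝ) * t := le_antisymm hfl (htS.trans hsS)
    have hsS' : (s:ℝ) = S := by nlinarith
    have ht1 : t = 1 := by
      have : (S:ℝ) * t = (S:ℝ) * 1 := by rw [← hseq, hsS']; ring
      exact mul_left_cancel₀ (ne_of_gt hS0) this
    have hIval : affineInterp S y t = y s := by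
      rw [affineInterp, ← hsdef, ← hseq]
      simp
    have hsnat : s = S := by exact_mod_cast hsS'
    have hq : ((s:ℝ))/S = 1 := by rw [hsS']; field_simp
    rw [hIval, ht1]
    calc ‖y s - X 1‖ = ‖y s - X ((s:ℝ)/S)‖ := by rw [hq]
      _ ≤ E₀ := hnode s (le_of_eq hsnat)
      _ ≤ E₀ + M / S := by linarith

/-- Convergence of the affine interpolants of the explicit Euler trajectories
with converging parameters `p^S → p` to the continuous flow, both in
`L²((0,1))` and uniformly at the nodes. -/
theorem euler_interpolants_converge_to_flow
    (n d : ℕ)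
    (f : EuclideanSpace ℝ (Fin n) × EuclideanSpace ℝ (Fin d) → EuclideanSpace ℝ (Fin n))
    (hf : ContDiff ℝ 1 f) (hsupp : HasCompactSupport f)
    (pS : ℕ → EuclideanSpace ℝ (Fin d)) (p : EuclideanSpace ℝ (Fin d))
    (hp : Tendsto pS atTop (nhds p))
    (x₀ : EuclideanSpace ℝ (Fin n)) (X : ℝ → EuclideanSpace ℝ (Fin n))
    (hX0 : X 0 = x₀)
    (hX : ∀ t ∈ Icc (0:ℝ) 1, HasDerivAt X (f (X t, p)) t) :
    Tendsto
      (fun S : ℕ => ∫ t in (0:ℝ)..1,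
        ‖affineInterp S (eulerIter f x₀ S (pS S)) t - X t‖ ^ 2)
      atTop (nhds 0) ∧
    ∀ ε > (0:ℝ), ∃ S₀ : ℕ, ∀ S ≥ S₀, ∀ s ≤ S,
      ‖eulerIter f x₀ S (pS S) s - X ((s : ℝ) / S)‖ ≤ ε := by
  obtain ⟨K, hK⟩ := ContDiff.lipschitzWith_of_hasCompactSupport hsupp hf (by norm_num)
  set L : ℝ := max (K:ℝ) 1 with hLdef
  have hL : 1 ≤ L := le_max_right _ _
  have hL0 : (0:ℝ) < L := lt_of_lt_of_le one_pos hL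
  have hlip : ∀ u v, ‖f u - f v‖ ≤ L * ‖u - v‖ := by
    intro u v
    have := hK.dist_le_mul u v
    rw [dist_eq_norm, dist_eq_norm] at this
    calc ‖f u - f v‖ ≤ K * ‖u - v‖ := this
      _ ≤ L * ‖u - v‖ := by gcongr; exact le_max_left _ _
  obtain ⟨M, hfM⟩ := hf.continuous.bounded_above_of_compact_support hsupp
  have hM : 0 ≤ M := le_trans (norm_nonneg _) (hfM 0)
  have hXc : ContinuousOn X (Icc 0 1) :=
    fun t ht => ((hX t ht).continuousAt).continuousWithinAt
  have hXlip : ∀ a ∈ Icc (0:ℝ) 1, ∀ b ∈ Icc (0:ℝ) 1, ‖X b - X a‖ ≤ M * |b - a| := by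
    intro a ha b hb
    have := Convex.norm_image_sub_le_of_norm_hasDerivWithin_le
      (f := X) (f' := fun t => f (X t, p)) (s := Icc (0:ℝ) 1)
      (fun t ht => (hX t ht).hasDerivWithinAt) (fun t _ => hfM _) (convex_Icc 0 1) ha hb
    simpa [Real.norm_eq_abs] using this
  set Err : ℕ → ℝ := fun S => L * (‖pS S - p‖ + M / S) * Real.exp L with hErrdef
  have hErr0 : ∀ S, 0 ≤ Err S := fun S => by
    have : (0:ℝ) ≤ ‖pS S - p‖ + M / S := by positivity
    rw [hErrdef]
    positivity
  have hnode : ∀ S : ℕ, 1 ≤ S → ∀ s ≤ S,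
      ‖eulerIter f x₀ S (pS S) s - X ((s:ℝ) / S)‖ ≤ Err S := fun S hS =>
    euler_node_bound hL hM hf.continuous hlip hfM hX0 hX hS
  have hMS : Tendsto (fun S : ℕ => M / S) atTop (nhds 0) :=
    tendsto_const_div_atTop_nhds_zero_nat M
  have hErrto : Tendsto Err atTop (nhds 0) := by
    have h1 : Tendsto (fun S => ‖pS S - p‖) atTop (nhds 0) :=
      tendsto_iff_norm_sub_tendsto_zero.mp hp
    have := ((h1.add hMS).const_mul L).mul_const (Real.exp L)
    simpa using this
  refine ⟨?_, ?_⟩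
  · -- L² convergence
    have hBto : Tendsto (fun S : ℕ => (Err S + M / S) ^ 2) atTop (nhds 0) := by
      have := (hErrto.add hMS).pow 2
      simpa using this
    apply squeeze_zero' ?_ ?_ hBto
    · filter_upwards with S
      exact intervalIntegral.integral_nonneg zero_le_one (fun u _ => by positivity)
    · filter_upwards [eventually_ge_atTop 1] with S hS
      set y := eulerIter f x₀ S (pS S) with hydef
      set B : ℝ := Err S + M / S with hBdef
      have hB0 : 0 ≤ B := by
        have := hErr0 S
        have : (0:ℝ) ≤ M / S := by positivity
        rw [hBdef]; linarith [hErr0 S]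
      have hptw : ∀ t ∈ Icc (0:ℝ) 1, ‖affineInterp S y t - X t‖ ≤ B := fun t ht =>
        affineInterp_err_bound hS (hErr0 S) hM (hnode S hS) hXlip ht
      have hfloor : Measurable (fun t : ℝ => ⌊(S:ℝ) * t⌋₊) :=
        (measurable_id.const_mul (S:ℝ)).nat_floor
      have hcoe : Measurable (fun t : ℝ => ((⌊(S:ℝ) * t⌋₊ : ℕ) : ℝ)) :=
        measurable_from_top.comp hfloor
      have hImeas : Measurable (fun t => affineInterp S y t) := by
        apply Measurable.add
        · exact ((hcoe.add_const 1).sub (measurable_id.const_mul (S:ℝ))).smul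
            ((measurable_from_top (f := y)).comp hfloor)
        · exact ((measurable_id.const_mul (S:ℝ)).sub hcoe).smul
            ((measurable_from_top (f := y)).comp (hfloor.add_const 1))
      have hXae : MeasureTheory.AEStronglyMeasurable X
          (MeasureTheory.volume.restrict (Ioc (0:ℝ) 1)) :=
        (hXc.mono Ioc_subset_Icc_self).aestronglyMeasurable measurableSet_Ioc
      have hsubasm : MeasureTheory.AEStronglyMeasurable
          (fun t => affineInterp S y t - X t)
          (MeasureTheory.volume.restrict (Ioc (0:ℝ) 1)) :=
        hImeas.aestronglyMeasurable.sub hXae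
      have hgasm : MeasureTheory.AEStronglyMeasurable
          (fun t => ‖affineInterp S y t - X t‖ ^ 2)
          (MeasureTheory.volume.restrict (Ioc (0:ℝ) 1)) := by
        have heq : (fun t => ‖affineInterp S y t - X t‖ ^ 2)
            = fun t => ‖affineInterp S y t - X t‖ * ‖affineInterp S y t - X t‖ := by
          funext t; rw [sq]
        rw [heq]
        exact hsubasm.norm.mul hsubasm.norm
      have hint : IntervalIntegrable (fun t => ‖affineInterp S y t - X t‖ ^ 2)
          MeasureTheory.volume 0 1 := by
        rw [intervalIntegrable_iff_integrableOn_Ioc_of_le zero_le_one]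
        apply MeasureTheory.Integrable.mono'
          (g := fun _ => B ^ 2) (MeasureTheory.integrable_const _) hgasm
        filter_upwards [MeasureTheory.ae_restrict_mem measurableSet_Ioc] with t ht
        rw [Real.norm_eq_abs, abs_of_nonneg (by positivity)]
        exact pow_le_pow_left₀ (norm_nonneg _) (hptw t (Ioc_subset_Icc_self ht)) 2
      calc (∫ t in (0:ℝ)..1, ‖affineInterp S y t - X t‖ ^ 2)
          ≤ ∫ _ in (0:ℝ)..1, B ^ 2 :=
            intervalIntegral.integral_mono_on zero_le_one hint intervalIntegrable_const
              (fun t ht => pow_le_pow_left₀ (norm_nonneg _) (hptw t ht) 2)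
        _ = B ^ 2 := by simp
  · -- uniform node convergence
    intro ε hε
    have hev : ∀ᶠ S : ℕ in atTop, Err S < ε ∧ 1 ≤ S :=
      (hErrto.eventually (gt_mem_nhds hε)).and (eventually_ge_atTop 1)
    obtain ⟨S₀, hS₀⟩ := eventually_atTop.mp hev
    refine ⟨S₀, fun S hS s hs => ?_⟩
    obtain ⟨h1, h2⟩ := hS₀ S hS
    exact (hnode S h2 s hs).trans h1.le
end
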